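/- Let φ be a nonzero nilpotent endomorphism of a finite-dimensional vector space V of dimension d. Then φ^(d-1) ≠ 0 if and only if φ commutes with no idempotent endomorphism ε with ε ≠ 0 and ε ≠ 1 (i.e., φ is indecomposable). -/

import Mathlib

open Module LinearMap Polynomial

lemma aux_nil_pow_finrank {K V : Type*} [Field K] [AddCommGroup V] [Module K V]
    [FiniteDimensional K V] (ψ : Module.End K V) (h : IsNilpotent ψ) :
    ψ ^ Module.finrank K V = 0 := by
  have h1 := h.charpoly_eq_X_pow_finrank
  have h2 := ψ.aeval_self_charpoly
  rw [h1] at h2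
  simpa [map_pow] using h2

lemma aux_pow_finrank_apply {K V : Type*} [Field K] [AddCommGroup V] [Module K V]
    [FiniteDimensional K V] (φ : Module.End K V) (hnil : IsNilpotent φ)
    (W : Submodule K V) (hW : ∀ x ∈ W, φ x ∈ W) :
    ∀ x ∈ W, (φ ^ Module.finrank K W) x = 0 := by
  intro x hx
  have hres : IsNilpotent (φ.restrict hW) := by
    obtain ⟨N, hN⟩ := hnil
    refine ⟨N, ?_⟩
    rw [Module.End.pow_restrict]
    ext y
    simp [LinearMap.restrict_coe_apply, hN]
  have h0 := aux_nil_pow_finrank _ hres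
  rw [Module.End.pow_restrict] at h0
  have := congrArg Subtype.val (LinearMap.ext_iff.mp h0 ⟨x, hx⟩)
  rwa [LinearMap.restrict_coe_apply] at this

theorem stmt5 {K V : Type*} [Field K] [AddCommGroup V] [Module K V]
    [FiniteDimensional K V] (d : ℕ) (hd : d = Module.finrank K V) (hd1 : 1 ≤ d)
    (φ : Module.End K V) (hnil : IsNilpotent φ) (hφ : φ ≠ 0) :
    φ ^ (d - 1) ≠ 0 ↔
      ¬ ∃ ε : Module.End K V, ε * ε = ε ∧ ε ≠ 0 ∧ ε ≠ 1 ∧ ε * φ = φ * ε := by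
  have hV : Nontrivial V := by
    rw [← Module.finrank_pos_iff (R := K), ← hd]; omega
  constructor
  · -- maximal index → indecomposable
    rintro h ⟨ε, hidem, hne0, hne1, hc⟩
    apply h
    -- range and kernel of ε are φ-invariant
    have hinv1 : ∀ x ∈ LinearMap.range ε, φ x ∈ LinearMap.range ε := by
      rintro x ⟨y, rfl⟩
      exact ⟨φ y, by rw [← Module.End.mul_apply, hc, Module.End.mul_apply]⟩
    have hinv2 : ∀ x ∈ LinearMap.ker ε, φ x ∈ LinearMap.ker ε := by
      intro x hx
      rw [LinearMap.mem_ker] at hx ⊢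
      rw [← Module.End.mul_apply, hc, Module.End.mul_apply, hx, map_zero]
    set r₁ := Module.finrank K (LinearMap.range ε) with hr₁
    set r₂ := Module.finrank K (LinearMap.ker ε) with hr₂
    have hsum : r₁ + r₂ = d := by
      rw [hd]; exact LinearMap.finrank_range_add_finrank_ker ε
    have hr1pos : 0 < r₁ := by
      rcases Nat.eq_zero_or_pos r₁ with hz | h
      · exact absurd (LinearMap.range_eq_bot.mp (Submodule.finrank_eq_zero.mp hz)) hne0
      · exact h
    have hr2pos : 0 < r₂ := by
      rcases Nat.eq_zero_or_pos r₂ with hz | h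
      · exfalso
        have hinj := LinearMap.ker_eq_bot.mp (Submodule.finrank_eq_zero.mp hz)
        apply hne1
        ext x
        rw [Module.End.one_apply]
        exact hinj (by rw [← Module.End.mul_apply, hidem])
      · exact h
    have key : ∀ (W : Submodule K V), (∀ x ∈ W, φ x ∈ W) →
        Module.finrank K W ≤ d - 1 → ∀ x ∈ W, (φ ^ (d - 1)) x = 0 := by
      intro W hW hle x hx
      have h1 := aux_pow_finrank_apply φ hnil W hW x hx
      rw [← Nat.sub_add_cancel hle, pow_add, Module.End.mul_apply, h1, map_zero]
    ext x
    have hx1 : (φ ^ (d-1)) (ε x) = 0 :=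
      key _ hinv1 (by omega) _ (LinearMap.mem_range_self ε x)
    have hx2 : (φ ^ (d-1)) (x - ε x) = 0 := by
      refine key _ hinv2 (by omega) _ ?_
      rw [LinearMap.mem_ker, map_sub, ← Module.End.mul_apply, hidem, sub_self]
    have : x = ε x + (x - ε x) := by abel
    rw [LinearMap.zero_apply, this, map_add, hx1, hx2, add_zero]
  · -- indecomposable → maximal index
    intro hno h0
    apply hno
    classical
    -- k : nilpotency index
    have hex : ∃ n, φ ^ n = 0 := ⟨d - 1, h0⟩
    set k := Nat.find hex with hkdef
    have hk0 : φ ^ k = 0 := Nat.find_spec hex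
    have hkmin : ∀ m < k, φ ^ m ≠ 0 := fun m hm => Nat.find_min hex hm
    have hkle : k ≤ d - 1 := Nat.find_min' hex h0
    have hk1 : 1 ≤ k := by
      rcases Nat.eq_zero_or_pos k with h | h
      · exfalso; apply hφ; have := hk0; rw [h, pow_zero] at this
        exact absurd this one_ne_zero
      · exact h
    have hkm1 : φ ^ (k - 1) ≠ 0 := hkmin _ (by omega)
    obtain ⟨v, hv⟩ : ∃ v, (φ ^ (k - 1)) v ≠ 0 := by
      by_contra hall
      push_neg at hall
      exact hkm1 (by ext x; simp [hall x])
    have hpow : ∀ m, k ≤ m → φ ^ m = 0 := by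
      intro m hm
      rw [← Nat.sub_add_cancel hm, pow_add, hk0, mul_zero]
    -- the vectors v, φ v, ..., φ^(k-1) v are linearly independent
    set b : Fin k → V := fun i => (φ ^ (i : ℕ)) v with hb
    have hli : LinearIndependent K b := by
      rw [Fintype.linearIndependent_iff]
      intro g hg
      by_contra hgne
      push_neg at hgne
      obtain ⟨i₀, hi₀⟩ := hgne
      set s := Finset.univ.filter (fun i => g i ≠ 0) with hs
      have hsne : s.Nonempty := ⟨i₀, by simp [hs, hi₀]⟩
      set j := s.min' hsne with hj
      have hjs : g j ≠ 0 := by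
        have := s.min'_mem hsne
        simpa [hs] using this
      have hjmin : ∀ i : Fin k, g i ≠ 0 → j ≤ i := by
        intro i hi
        exact s.min'_le i (by simp [hs, hi])
      have h2 := congrArg (φ ^ (k - 1 - (j : ℕ))) hg
      rw [map_sum, map_zero] at h2
      have h3 : ∀ i : Fin k, (φ ^ (k - 1 - (j:ℕ))) (g i • b i)
          = g i • (φ ^ ((k - 1 - (j:ℕ)) + (i:ℕ))) v := by
        intro i
        rw [map_smul, hb]
        rw [pow_add, Module.End.mul_apply]
      rw [Finset.sum_congr rfl (fun i _ => h3 i)] at h2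
      have h4 : ∑ i : Fin k, g i • (φ ^ ((k - 1 - (j:ℕ)) + (i:ℕ))) v
          = g j • (φ ^ (k-1)) v := by
        rw [Finset.sum_eq_single j]
        · have hjk : (j:ℕ) < k := j.isLt
          have h8 : (k - 1 - (j:ℕ)) + (j:ℕ) = k - 1 := by omega
          rw [h8]
        · intro i _ hij
          by_cases hgi : g i = 0
          · rw [hgi, zero_smul]
          · have hji : (j:ℕ) < (i:ℕ) := by
              have := hjmin i hgi
              rcases lt_or_eq_of_le this with h | h
              · exact h
              · exact absurd h.symm (by simpa [Fin.ext_iff] using (fun hh => hij (Fin.ext hh)))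
            have hik : (i:ℕ) < k := i.isLt
            have hjk : (j:ℕ) < k := j.isLt
            have : φ ^ ((k - 1 - (j:ℕ)) + (i:ℕ)) = 0 := hpow _ (by omega)
            rw [this, LinearMap.zero_apply, smul_zero]
        · intro h; exact absurd (Finset.mem_univ j) h
      rw [h4] at h2
      exact hjs (by
        by_contra hgj
        exact hv (by
          rcases smul_eq_zero.mp h2 with h | h
          · exact absurd h hgj
          · exact h))
    -- the projection
    set W := Submodule.span K (Set.range b) with hW
    set B : Basis (Fin k) K W := Basis.span hli with hB
    obtain ⟨f, hf⟩ := LinearMap.exists_extend (B.coord ⟨k - 1, by omega⟩)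
    have hfb : ∀ i : Fin k, f (b i) = if (i : ℕ) = k - 1 then 1 else 0 := by
      intro i
      have h1 : (B i : V) = b i := congrArg Subtype.val (Basis.span_apply hli i)
      have h2 : f (b i) = (B.coord ⟨k - 1, by omega⟩) (B i) := by
        rw [← hf]
        rw [LinearMap.comp_apply, Submodule.subtype_apply, h1]
      rw [h2, Basis.coord_apply, Basis.repr_self]
      rw [Finsupp.single_apply]
      by_cases h : (i : ℕ) = k - 1
      · simp [Fin.ext_iff, h]
      · simp [Fin.ext_iff, h]
    have hfv : ∀ m : ℕ, f ((φ ^ m) v) = if m = k - 1 then 1 else 0 := by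
      intro m
      by_cases hm : m < k
      · have := hfb ⟨m, hm⟩
        simpa [hb] using this
      · push_neg at hm
        rw [hpow m hm, LinearMap.zero_apply, map_zero]
        rw [if_neg (by omega)]
    set π : Module.End K V :=
      ∑ i ∈ Finset.range k, ((f ∘ₗ (φ ^ (k - 1 - i))).smulRight ((φ ^ i) v)) with hπ
    have hπapp : ∀ x : V, π x = ∑ i ∈ Finset.range k,
        f ((φ ^ (k - 1 - i)) x) • (φ ^ i) v := by
      intro x
      rw [hπ, LinearMap.sum_apply]
      exact Finset.sum_congr rfl fun i _ => by
        rw [LinearMap.smulRight_apply, LinearMap.comp_apply]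
    -- π fixes each φ^m v, m < k
    have hfix : ∀ m, m < k → π ((φ ^ m) v) = (φ ^ m) v := by
      intro m hm
      rw [hπapp]
      have h1 : ∀ i ∈ Finset.range k,
          f ((φ ^ (k - 1 - i)) ((φ ^ m) v)) • (φ ^ i) v
            = (if i = m then (1:K) else 0) • (φ ^ i) v := by
        intro i hi
        rw [Finset.mem_range] at hi
        have : (φ ^ (k - 1 - i)) ((φ ^ m) v) = (φ ^ ((k - 1 - i) + m)) v := by
          rw [pow_add, Module.End.mul_apply]
        rw [this, hfv]
        congr 1
        by_cases h : i = m
        · rw [if_pos h, if_pos (by omega)]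
        · rw [if_neg h, if_neg (by omega)]
      rw [Finset.sum_congr rfl h1]
      simp only [ite_smul, one_smul, zero_smul]
      rw [Finset.sum_ite_eq' (Finset.range k) m]
      rw [if_pos (Finset.mem_range.mpr hm)]
    refine ⟨π, ?_, ?_, ?_, ?_⟩
    · -- idempotent
      ext x
      rw [Module.End.mul_apply]
      conv_lhs => rw [hπapp x]
      rw [map_sum]
      rw [Finset.sum_congr rfl (fun i hi => by
        rw [map_smul, hfix i (Finset.mem_range.mp hi)])]
      rw [← hπapp]
    · -- π ≠ 0
      intro hcontra
      have hv0 : v ≠ 0 := by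
        intro h; apply hv; rw [h, map_zero]
      have := hfix 0 (by omega)
      rw [pow_zero, Module.End.one_apply] at this
      rw [hcontra] at this
      exact hv0 (by rw [← this, LinearMap.zero_apply])
    · -- π ≠ 1
      intro hcontra
      have hWtop : W = ⊤ := by
        rw [Submodule.eq_top_iff']
        intro x
        have hx : x = π x := by rw [hcontra, Module.End.one_apply]
        rw [hx, hπapp]
        refine Submodule.sum_mem _ fun i hi => Submodule.smul_mem _ _ ?_
        rw [Finset.mem_range] at hi
        exact Submodule.subset_span ⟨⟨i, hi⟩, rfl⟩
      have hfr : Module.finrank K W = k := by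
        rw [finrank_eq_card_basis B, Fintype.card_fin]
      rw [hWtop, finrank_top] at hfr
      omega
    · -- commutes with φ
      ext x
      rw [Module.End.mul_apply, Module.End.mul_apply, hπapp (φ x), hπapp x, map_sum]
      have hL : ∀ i ∈ Finset.range k,
          f ((φ ^ (k - 1 - i)) (φ x)) • (φ ^ i) v
            = f ((φ ^ ((k - 1 - i) + 1)) x) • (φ ^ i) v := by
        intro i _
        have h5 : (φ ^ ((k - 1 - i) + 1)) x = (φ ^ (k - 1 - i)) (φ x) := by
          rw [pow_add, pow_one, Module.End.mul_apply]
        rw [h5]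
      have hR : ∀ i ∈ Finset.range k,
          φ (f ((φ ^ (k - 1 - i)) x) • (φ ^ i) v)
            = f ((φ ^ (k - 1 - i)) x) • (φ ^ (i + 1)) v := by
        intro i _
        rw [map_smul, ← Module.End.mul_apply, ← pow_succ']
      rw [Finset.sum_congr rfl hL, Finset.sum_congr rfl hR]
      obtain ⟨n, hn⟩ : ∃ n, k = n + 1 := ⟨k - 1, by omega⟩
      have hk0' : φ ^ (n + 1) = 0 := by rw [← hn]; exact hk0
      rw [hn]
      rw [Finset.sum_range_succ', Finset.sum_range_succ]
      have hA0 : f ((φ ^ ((n + 1 - 1 - 0) + 1)) x) • (φ ^ (0:ℕ)) v = 0 := by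
        have h6 : (n + 1 - 1 - 0) + 1 = n + 1 := by omega
        rw [h6, hk0', LinearMap.zero_apply, map_zero, zero_smul]
      have hBlast : f ((φ ^ (n + 1 - 1 - n)) x) • (φ ^ (n + 1)) v = 0 := by
        rw [hk0', LinearMap.zero_apply, smul_zero]
      rw [hA0, hBlast, add_zero, add_zero]
      refine Finset.sum_congr rfl fun i hi => ?_
      rw [Finset.mem_range] at hi
      have h7 : (n + 1 - 1 - (i + 1)) + 1 = n + 1 - 1 - i := by omega
      rw [h7]
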